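/- Let U be a bounded open set in ℝ^d, let n be a positive integer, and let γ ∈ (0,1]. Then ℱ_n^γ(U) is a closed subset of C(U̅). -/

import Mathlib

open Set Filter Topology

/-- `K_n`: the points of `U` at distance at least `1/n` from the boundary of `U`. -/
def Kset {d : ℕ} (U : Set (EuclideanSpace ℝ (Fin d))) (n : ℕ) :
    Set (EuclideanSpace ℝ (Fin d)) :=
  {u ∈ U | ∀ x ∈ frontier U, 1 / (n : ℝ) ≤ ‖u - x‖}

/-- `𝒞_n^γ(U)`: unit-speed `C¹` curves `c : [-1/n, 1/n] → U` whose derivative satisfies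
`‖c'(s₂) - c'(s₁)‖ ≤ n |s₂ - s₁|^γ` and whose image lies in `K_n`. -/
def CurveClass {d : ℕ} (U : Set (EuclideanSpace ℝ (Fin d))) (n : ℕ) (γ : ℝ) :
    Set (ℝ → EuclideanSpace ℝ (Fin d)) :=
  {c | ContDiffOn ℝ 1 c (Icc (-(1 / (n : ℝ))) (1 / n)) ∧
    (∀ s ∈ Icc (-(1 / (n : ℝ))) (1 / n),
      ‖derivWithin c (Icc (-(1 / (n : ℝ))) (1 / n)) s‖ = 1) ∧
    (∀ s₁ ∈ Icc (-(1 / (n : ℝ))) (1 / n), ∀ s₂ ∈ Icc (-(1 / (n : ℝ))) (1 / n),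
      ‖derivWithin c (Icc (-(1 / (n : ℝ))) (1 / n)) s₂ -
          derivWithin c (Icc (-(1 / (n : ℝ))) (1 / n)) s₁‖ ≤ (n : ℝ) * |s₂ - s₁| ^ γ) ∧
    ∀ s ∈ Icc (-(1 / (n : ℝ))) (1 / n), c s ∈ Kset U n}

open Classical in
/-- Extend a continuous function on `closure U` to all of `ℝ^d` by zero. -/
noncomputable def extendCl {d : ℕ} (U : Set (EuclideanSpace ℝ (Fin d)))
    (f : C(closure U, ℝ)) : EuclideanSpace ℝ (Fin d) → ℝ :=
  fun x => if hx : x ∈ closure U then f ⟨x, hx⟩ else 0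

/-- `ℱ_n^γ(U)`: those `f ∈ C(U̅)` such that for some curve `c ∈ 𝒞_n^γ(U)` one has
`|f (c s) - f (c 0)| ≤ n |s|` for all `s ∈ [-1/n, 1/n]`. -/
def Fclass {d : ℕ} (U : Set (EuclideanSpace ℝ (Fin d))) (n : ℕ) (γ : ℝ) :
    Set C(closure U, ℝ) :=
  {f | ∃ c ∈ CurveClass U n γ, ∀ s ∈ Icc (-(1 / (n : ℝ))) (1 / n),
    |extendCl U f (c s) - extendCl U f (c 0)| ≤ (n : ℝ) * |s|}

/-- `K_n` is a closed set. -/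
lemma isClosed_Kset {d : ℕ} {U : Set (EuclideanSpace ℝ (Fin d))} (hU : IsOpen U)
    {n : ℕ} (hn : 0 < n) : IsClosed (Kset U n) := by
  have hn' : (0 : ℝ) < 1 / n := by
    have : (0 : ℝ) < n := by exact_mod_cast hn
    positivity
  have hKeq : Kset U n = closure U ∩ ⋂ x ∈ frontier U, {u | 1 / (n : ℝ) ≤ ‖u - x‖} := by
    ext u
    simp only [Kset, mem_inter_iff, mem_iInter, mem_setOf_eq]
    constructor
    · rintro ⟨h1, h2⟩
      exact ⟨subset_closure h1, h2⟩
    · rintro ⟨h1, h2⟩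
      refine ⟨?_, h2⟩
      by_contra hu
      have hfr : u ∈ frontier U := by
        rw [hU.frontier_eq]; exact ⟨h1, hu⟩
      have := h2 u hfr
      simp only [sub_self, norm_zero] at this
      linarith
  rw [hKeq]
  refine isClosed_closure.inter (isClosed_biInter fun x _ => ?_)
  exact isClosed_le continuous_const ((continuous_id.sub continuous_const).norm)

/-- Fundamental theorem of calculus for a `C¹` curve on `[-1/n, 1/n]`. -/
lemma curve_ftc {d : ℕ} {n : ℕ} (hn : 0 < n) {c : ℝ → EuclideanSpace ℝ (Fin d)}
    (hc : ContDiffOn ℝ 1 c (Icc (-(1 / (n : ℝ))) (1 / n))) {s : ℝ}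
    (hs : s ∈ Icc (-(1 / (n : ℝ))) (1 / n)) :
    c s = c 0 + ∫ t in (0 : ℝ)..s, derivWithin c (Icc (-(1 / (n : ℝ))) (1 / n)) t := by
  have hn' : (0 : ℝ) < 1 / n := by
    have : (0 : ℝ) < n := by exact_mod_cast hn
    positivity
  have hab : -(1 / (n : ℝ)) < 1 / n := by linarith
  have h0 : (0 : ℝ) ∈ Icc (-(1 / (n : ℝ))) (1 / n) := ⟨by linarith, by linarith⟩
  have hsub : uIcc (0 : ℝ) s ⊆ Icc (-(1 / (n : ℝ))) (1 / n) := uIcc_subset_Icc h0 hs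
  have dCont : ContinuousOn (derivWithin c (Icc (-(1 / (n : ℝ))) (1 / n)))
      (Icc (-(1 / (n : ℝ))) (1 / n)) :=
    hc.continuousOn_derivWithin (uniqueDiffOn_Icc hab) le_rfl
  have key := intervalIntegral.integral_eq_sub_of_hasDeriv_right
    (f := c) (f' := derivWithin c (Icc (-(1 / (n : ℝ))) (1 / n))) (a := (0:ℝ)) (b := s)
    (hc.continuousOn.mono hsub) ?_ ((dCont.mono hsub).intervalIntegrable)
  · rw [key]; abel
  · intro x hx
    have hxI : x ∈ Ioo (-(1 / (n : ℝ))) (1 / n) := by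
      constructor
      · have h1 : -(1 / (n : ℝ)) ≤ (0 : ℝ) ⊓ s := le_min (by linarith) hs.1
        exact lt_of_le_of_lt h1 hx.1
      · have h2 : (0 : ℝ) ⊔ s ≤ 1 / n := max_le (by linarith) hs.2
        exact lt_of_lt_of_le hx.2 h2
    have hD : HasDerivWithinAt c
        (derivWithin c (Icc (-(1 / (n : ℝ))) (1 / n)) x) (Icc (-(1 / (n : ℝ))) (1 / n)) x :=
      ((hc.differentiableOn one_ne_zero) x (Ioo_subset_Icc_self hxI)).hasDerivWithinAt
    exact (hD.hasDerivAt (Icc_mem_nhds hxI.1 hxI.2)).hasDerivWithinAt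

set_option synthInstance.maxHeartbeats 1000000 in
set_option maxHeartbeats 4000000 in
/-- `ℱ_n^γ(U)` is a closed subset of `C(U̅)`. -/
theorem fclass_isClosed {d : ℕ} (U : Set (EuclideanSpace ℝ (Fin d))) (hU : IsOpen U)
    (hUb : Bornology.IsBounded U) (n : ℕ) (hn : 0 < n) (γ : ℝ) (hγ : γ ∈ Ioc (0 : ℝ) 1) :
    IsClosed (Fclass U n γ) := by
  obtain ⟨hγ0, hγ1⟩ := hγ
  have hn' : (0 : ℝ) < 1 / n := by
    have : (0 : ℝ) < n := by exact_mod_cast hn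
    positivity
  have hnn : (0 : ℝ) ≤ n := by positivity
  have hab : -(1 / (n : ℝ)) < 1 / n := by linarith
  have h0mem : (0 : ℝ) ∈ Icc (-(1 / (n : ℝ))) (1 / n) := ⟨by linarith, by linarith⟩
  have hclU : IsCompact (closure U) :=
    Metric.isCompact_of_isClosed_isBounded isClosed_closure hUb.closure
  haveI : CompactSpace ↥(closure U) := isCompact_iff_compactSpace.mp hclU
  haveI : CompactSpace ↥(Icc (-(1 / (n : ℝ))) (1 / n)) :=
    isCompact_iff_compactSpace.mp isCompact_Icc
  refine IsSeqClosed.isClosed ?_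
  intro fs f hfs hf
  choose c hc hfc using hfs
  -- basic facts about the curves
  have hcC1 : ∀ k, ContDiffOn ℝ 1 (c k) (Icc (-(1 / (n : ℝ))) (1 / n)) := fun k => (hc k).1
  have hcnorm := fun k => (hc k).2.1
  have hchold := fun k => (hc k).2.2.1
  have hcK := fun k => (hc k).2.2.2
  have hdCont : ∀ k, ContinuousOn (derivWithin (c k) (Icc (-(1 / (n : ℝ))) (1 / n)))
      (Icc (-(1 / (n : ℝ))) (1 / n)) := fun k =>
    (hcC1 k).continuousOn_derivWithin (uniqueDiffOn_Icc hab) le_rfl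
  -- the curves are 1-Lipschitz
  have hlip : ∀ k, ∀ x ∈ Icc (-(1 / (n : ℝ))) (1 / n), ∀ y ∈ Icc (-(1 / (n : ℝ))) (1 / n),
      ‖c k y - c k x‖ ≤ |y - x| := by
    intro k x hx y hy
    have := Convex.norm_image_sub_le_of_norm_derivWithin_le
      ((hcC1 k).differentiableOn one_ne_zero)
      (fun z hz => le_of_eq (hcnorm k z hz)) (convex_Icc _ _) hx hy
    simpa [Real.norm_eq_abs] using this
  -- package curve and derivative into a bounded continuous function
  let G : ℕ → BoundedContinuousFunction ↥(Icc (-(1 / (n : ℝ))) (1 / n))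
      (EuclideanSpace ℝ (Fin d) × EuclideanSpace ℝ (Fin d)) := fun k =>
    BoundedContinuousFunction.mkOfCompact
      ⟨fun s => (c k s, derivWithin (c k) (Icc (-(1 / (n : ℝ))) (1 / n)) s),
        (((hcC1 k).continuousOn.prodMk (hdCont k)).restrict)⟩
  have hGapp : ∀ k x, G k x =
      (c k ↑x, derivWithin (c k) (Icc (-(1 / (n : ℝ))) (1 / n)) ↑x) := fun k x => rfl
  -- Arzelà–Ascoli
  have hsK : IsCompact ((closure U) ×ˢ Metric.sphere (0 : EuclideanSpace ℝ (Fin d)) 1) :=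
    hclU.prod (isCompact_sphere 0 1)
  have hKsubU : Kset U n ⊆ U := fun u hu => hu.1
  have hin : ∀ (g : BoundedContinuousFunction ↥(Icc (-(1 / (n : ℝ))) (1 / n))
      (EuclideanSpace ℝ (Fin d) × EuclideanSpace ℝ (Fin d))) (x),
      g ∈ Set.range G → g x ∈ (closure U) ×ˢ Metric.sphere (0 : EuclideanSpace ℝ (Fin d)) 1 := by
    rintro g x ⟨k, rfl⟩
    rw [hGapp]
    constructor
    · exact subset_closure (hKsubU (hcK k x.1 x.2))
    · rw [mem_sphere_zero_iff_norm]
      exact hcnorm k x.1 x.2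
  have hequi : Equicontinuous (fun g : ↥(Set.range G) =>
      ⇑(g : BoundedContinuousFunction ↥(Icc (-(1 / (n : ℝ))) (1 / n))
        (EuclideanSpace ℝ (Fin d) × EuclideanSpace ℝ (Fin d)))) := by
    refine Metric.equicontinuous_of_continuity_modulus (fun t => |t| + n * |t| ^ γ) ?_ _ ?_
    · have hr : ContinuousAt (fun x : ℝ => x ^ γ) (|(0:ℝ)|) := by
        simpa using Real.continuousAt_rpow_const 0 γ (Or.inr hγ0.le)
      have hcont : ContinuousAt (fun t : ℝ => |t| + n * |t| ^ γ) 0 :=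
        ContinuousAt.add continuous_abs.continuousAt
          (ContinuousAt.mul continuousAt_const (hr.comp continuous_abs.continuousAt))
      have := hcont.tendsto
      simp only [abs_zero, Real.zero_rpow hγ0.ne', mul_zero, add_zero] at this
      exact this
    · rintro x y ⟨g, k, rfl⟩
      show dist (G k x) (G k y) ≤ |dist x y| + ↑n * |dist x y| ^ γ
      have habs : |dist x y| = dist x y := abs_of_nonneg dist_nonneg
      have hdxy : dist x y = |(x : ℝ) - y| := rfl
      rw [habs, hGapp, hGapp, Prod.dist_eq, hdxy]
      refine max_le ?_ ?_
      · have h1 : dist (c k ↑x) (c k ↑y) ≤ |(x:ℝ) - y| := by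
          rw [dist_eq_norm]
          simpa [abs_sub_comm] using hlip k y.1 y.2 x.1 x.2
        have h2 : (0:ℝ) ≤ (n:ℝ) * |(x:ℝ) - y| ^ γ := by positivity
        linarith
      · have h1 : dist (derivWithin (c k) (Icc (-(1 / (n : ℝ))) (1 / n)) ↑x)
            (derivWithin (c k) (Icc (-(1 / (n : ℝ))) (1 / n)) ↑y) ≤ (n:ℝ) * |(x:ℝ) - y| ^ γ := by
          rw [dist_eq_norm]
          simpa [abs_sub_comm] using hchold k y.1 y.2 x.1 x.2
        have h2 : (0:ℝ) ≤ |(x:ℝ) - y| := abs_nonneg _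
        linarith
  have hcomp : IsCompact (closure (Set.range G)) :=
    BoundedContinuousFunction.arzela_ascoli _ hsK _ hin hequi
  obtain ⟨F, -, φ, hφmono, hφtend⟩ :=
    hcomp.tendsto_subseq (fun k => subset_closure (mem_range_self (f := G) k))
  -- pointwise convergence
  have hpt : ∀ x : ↥(Icc (-(1 / (n : ℝ))) (1 / n)),
      Tendsto (fun k => G (φ k) x) atTop (𝓝 (F x)) := by
    intro x
    refine tendsto_iff_dist_tendsto_zero.mpr
      (squeeze_zero (fun _ => dist_nonneg)
        (fun k => BoundedContinuousFunction.dist_coe_le_dist x) ?_)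
    exact tendsto_iff_dist_tendsto_zero.mp hφtend
  -- limit data
  set g1 : ℝ → EuclideanSpace ℝ (Fin d) := fun t => (F (projIcc _ _ hab.le t)).1 with hg1def
  set g2 : ℝ → EuclideanSpace ℝ (Fin d) := fun t => (F (projIcc _ _ hab.le t)).2 with hg2def
  have hg2cont : Continuous g2 :=
    continuous_snd.comp (F.continuous.comp continuous_projIcc)
  have hlim1 : ∀ s (hs : s ∈ Icc (-(1 / (n : ℝ))) (1 / n)),
      Tendsto (fun k => c (φ k) s) atTop (𝓝 (g1 s)) := by
    intro s hs
    have := (continuous_fst.tendsto _).comp (hpt ⟨s, hs⟩)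
    simp only [hg1def, projIcc_of_mem hab.le hs]
    exact this
  have hlim2 : ∀ s (hs : s ∈ Icc (-(1 / (n : ℝ))) (1 / n)),
      Tendsto (fun k => derivWithin (c (φ k)) (Icc (-(1 / (n : ℝ))) (1 / n)) s) atTop
        (𝓝 (g2 s)) := by
    intro s hs
    have := (continuous_snd.tendsto _).comp (hpt ⟨s, hs⟩)
    simp only [hg2def, projIcc_of_mem hab.le hs]
    exact this
  -- the limit curve
  set cL : ℝ → EuclideanSpace ℝ (Fin d) := fun t => g1 0 + ∫ u in (0:ℝ)..t, g2 u with hcLdef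
  have hDeriv : ∀ t, HasDerivAt cL (g2 t) t := by
    intro t
    have : HasDerivAt (fun u => ∫ x in (0:ℝ)..u, g2 x) (g2 t) t :=
      intervalIntegral.integral_hasDerivAt_right (hg2cont.intervalIntegrable _ _)
        (hg2cont.stronglyMeasurableAtFilter _ _) hg2cont.continuousAt
    simpa [hcLdef] using this.const_add (g1 0)
  have hcLderiv : ∀ s ∈ Icc (-(1 / (n : ℝ))) (1 / n),
      derivWithin cL (Icc (-(1 / (n : ℝ))) (1 / n)) s = g2 s := fun s hs =>
    ((hDeriv s).hasDerivWithinAt).derivWithin (uniqueDiffOn_Icc hab s hs)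
  have hcLC1 : ContDiffOn ℝ 1 cL (Icc (-(1 / (n : ℝ))) (1 / n)) := by
    have : ContDiff ℝ 1 cL := by
      rw [contDiff_one_iff_deriv]
      refine ⟨fun t => (hDeriv t).differentiableAt, ?_⟩
      have : deriv cL = g2 := funext fun t => (hDeriv t).deriv
      rw [this]; exact hg2cont
    exact this.contDiffOn
  -- FTC identity passes to the limit, giving `cL s = g1 s` on the interval
  have hcLeq : ∀ s ∈ Icc (-(1 / (n : ℝ))) (1 / n), cL s = g1 s := by
    intro s hs
    have hsub : uIcc (0 : ℝ) s ⊆ Icc (-(1 / (n : ℝ))) (1 / n) := uIcc_subset_Icc h0mem hs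
    have hIoc : uIoc (0:ℝ) s ⊆ Icc (-(1 / (n : ℝ))) (1 / n) :=
      (Ioc_subset_Icc_self).trans hsub
    have hintlim : Tendsto
        (fun k => ∫ u in (0:ℝ)..s, derivWithin (c (φ k)) (Icc (-(1 / (n : ℝ))) (1 / n)) u)
        atTop (𝓝 (∫ u in (0:ℝ)..s, g2 u)) := by
      rw [tendsto_iff_dist_tendsto_zero]
      refine squeeze_zero (fun _ => dist_nonneg) (g := fun k => dist (G (φ k)) F * |s - 0|) ?_ ?_
      · intro k
        have hint1 : IntervalIntegrable
            (derivWithin (c (φ k)) (Icc (-(1 / (n : ℝ))) (1 / n))) MeasureTheory.volume 0 s :=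
          ((hdCont (φ k)).mono hsub).intervalIntegrable
        have hint2 : IntervalIntegrable g2 MeasureTheory.volume 0 s :=
          hg2cont.intervalIntegrable _ _
        rw [dist_eq_norm, ← intervalIntegral.integral_sub hint1 hint2]
        refine intervalIntegral.norm_integral_le_of_norm_le_const ?_
        intro x hx
        have hxI : x ∈ Icc (-(1 / (n : ℝ))) (1 / n) := hIoc hx
        have h1 : ‖derivWithin (c (φ k)) (Icc (-(1 / (n : ℝ))) (1 / n)) x - g2 x‖ =
            dist ((G (φ k)) ⟨x, hxI⟩).2 (F ⟨x, hxI⟩).2 := by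
          rw [dist_eq_norm, hGapp]
          simp [hg2def, projIcc_of_mem hab.le hxI]
        rw [h1]
        calc dist ((G (φ k)) ⟨x, hxI⟩).2 (F ⟨x, hxI⟩).2
            ≤ dist ((G (φ k)) ⟨x, hxI⟩) (F ⟨x, hxI⟩) := by
              rw [Prod.dist_eq]; exact le_max_right _ _
          _ ≤ dist (G (φ k)) F := BoundedContinuousFunction.dist_coe_le_dist _
      · have : Tendsto (fun k => dist (G (φ k)) F) atTop (𝓝 0) :=
          tendsto_iff_dist_tendsto_zero.mp hφtend
        simpa using this.mul_const |s - 0|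
    have hlhs : Tendsto (fun k => c (φ k) s) atTop (𝓝 (g1 s)) := hlim1 s hs
    have hrhs : Tendsto (fun k => c (φ k) s) atTop (𝓝 (g1 0 + ∫ u in (0:ℝ)..s, g2 u)) := by
      have heq : ∀ k, c (φ k) s = c (φ k) 0 +
          ∫ u in (0:ℝ)..s, derivWithin (c (φ k)) (Icc (-(1 / (n : ℝ))) (1 / n)) u :=
        fun k => curve_ftc hn (hcC1 (φ k)) hs
      rw [tendsto_congr heq]
      exact (hlim1 0 h0mem).add hintlim
    have := tendsto_nhds_unique hlhs hrhs
    rw [hcLdef]; exact this.symm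
  -- membership of the limit curve in the curve class
  have hcLnorm : ∀ s ∈ Icc (-(1 / (n : ℝ))) (1 / n),
      ‖derivWithin cL (Icc (-(1 / (n : ℝ))) (1 / n)) s‖ = 1 := by
    intro s hs
    rw [hcLderiv s hs]
    refine tendsto_nhds_unique ((hlim2 s hs).norm) ?_
    rw [tendsto_congr (fun k => hcnorm (φ k) s hs)]
    exact tendsto_const_nhds
  have hcLhold : ∀ s₁ ∈ Icc (-(1 / (n : ℝ))) (1 / n), ∀ s₂ ∈ Icc (-(1 / (n : ℝ))) (1 / n),
      ‖derivWithin cL (Icc (-(1 / (n : ℝ))) (1 / n)) s₂ -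
        derivWithin cL (Icc (-(1 / (n : ℝ))) (1 / n)) s₁‖ ≤ (n : ℝ) * |s₂ - s₁| ^ γ := by
    intro s₁ hs₁ s₂ hs₂
    rw [hcLderiv s₁ hs₁, hcLderiv s₂ hs₂]
    refine le_of_tendsto (((hlim2 s₂ hs₂).sub (hlim2 s₁ hs₁)).norm) ?_
    exact Eventually.of_forall fun k => hchold (φ k) s₁ hs₁ s₂ hs₂
  have hcLK : ∀ s ∈ Icc (-(1 / (n : ℝ))) (1 / n), cL s ∈ Kset U n := by
    intro s hs
    rw [hcLeq s hs]
    exact (isClosed_Kset hU hn).mem_of_tendsto (hlim1 s hs)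
      (Eventually.of_forall fun k => hcK (φ k) s hs)
  -- the Lipschitz estimate for `f` along `cL`
  have hmemcl : ∀ s ∈ Icc (-(1 / (n : ℝ))) (1 / n), cL s ∈ closure U := fun s hs =>
    subset_closure (hKsubU (hcLK s hs))
  have hmemclk : ∀ k, ∀ s (hs : s ∈ Icc (-(1 / (n : ℝ))) (1 / n)),
      c (φ k) s ∈ closure U := fun k s hs => subset_closure (hKsubU (hcK (φ k) s hs))
  have hfφ : Tendsto (fun k => fs (φ k)) atTop (𝓝 f) := hf.comp (hφmono.tendsto_atTop)
  have key : ∀ s (hs : s ∈ Icc (-(1 / (n : ℝ))) (1 / n)),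
      Tendsto (fun k => extendCl U (fs (φ k)) (c (φ k) s)) atTop (𝓝 (extendCl U f (cL s))) := by
    intro s hs
    have h1 : (fun k => extendCl U (fs (φ k)) (c (φ k) s)) =
        fun k => fs (φ k) ⟨c (φ k) s, hmemclk k s hs⟩ := by
      funext k
      simp only [extendCl]
      rw [dif_pos (hmemclk k s hs)]
    have h2 : extendCl U f (cL s) = f ⟨cL s, hmemcl s hs⟩ := by
      simp only [extendCl]
      rw [dif_pos (hmemcl s hs)]
    rw [h1, h2]
    -- subtype convergence
    have hsub : Tendsto (fun k => (⟨c (φ k) s, hmemclk k s hs⟩ : ↥(closure U))) atTop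
        (𝓝 ⟨cL s, hmemcl s hs⟩) := by
      rw [tendsto_subtype_rng]
      have := hlim1 s hs
      rw [← hcLeq s hs] at this
      exact this
    have hA : Tendsto (fun k => f ⟨c (φ k) s, hmemclk k s hs⟩) atTop
        (𝓝 (f ⟨cL s, hmemcl s hs⟩)) := (f.continuous.tendsto _).comp hsub
    have hB : Tendsto (fun k => fs (φ k) ⟨c (φ k) s, hmemclk k s hs⟩ -
        f ⟨c (φ k) s, hmemclk k s hs⟩) atTop (𝓝 0) := by
      refine squeeze_zero_norm (fun k => ?_) (tendsto_iff_dist_tendsto_zero.mp hfφ)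
      rw [Real.norm_eq_abs, ← Real.dist_eq]
      exact ContinuousMap.dist_apply_le_dist _
    have := hB.add hA
    simpa using this
  exact ⟨cL, ⟨hcLC1, hcLnorm, hcLhold, hcLK⟩, fun s hs =>
    le_of_tendsto (((key s hs).sub (key 0 h0mem)).abs)
      (Eventually.of_forall fun k => hfc (φ k) s hs)⟩
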